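/- Fix an integer g ≥ 1 and real numbers C_{−1}, C_0, …, C_g satisfying C_{−1} > 2·C_0, C_i + C_{i+2} > 2·C_{i+1} for i = 0,…,g−2, and C_{g−1} > 2·C_g. Set C_{g+1} := 0 and for (X,Y) ∈ ℝ² define m_k(X,Y) = k·X + Y + C_k for k = 0,…,g+1. Let Γ̃_C be the set of points (X,Y) ∈ ℝ² at which the minimum of the g+4 values 2Y, C_{−1}, m_0(X,Y), …, m_{g+1}(X,Y) is attained by at least two of these terms. Define Γ_2 = {(X,Y) : min(2Y, C_{−1}, min over even k of m_k) = min over odd k of m_k}, Γ_3 = {(X,Y) : min(2Y, C_{−1}, min over odd k of m_k) = min over even k of m_k}, and Γ_4 = {(X,Y) : min(2Y, C_{−1}) = min over all k = 0,…,g+1 of m_k}. Then Γ̃_C = Γ_2 ∪ Γ_3 = Γ_2 ∪ Γ_3 ∪ Γ_4. -/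

import Mathlib

/-- The term `m_k(X,Y) = k·X + Y + C_k` of the tropical spectral polynomial. -/
noncomputable def mTerm (C : ℤ → ℝ) (k : ℕ) (p : ℝ × ℝ) : ℝ :=
  (k : ℝ) * p.1 + p.2 + C (k : ℤ)

/-- The family of the `g+4` values `2Y, C_{−1}, m_0(X,Y), …, m_{g+1}(X,Y)`. -/
noncomputable def tropVals (C : ℤ → ℝ) (p : ℝ × ℝ) : ℕ → ℝ := fun n =>
  if n = 0 then 2 * p.2 else if n = 1 then C (-1) else mTerm C (n - 2) p

/-- The tropical spectral curve `Γ̃_C`: the set of points where the minimum of the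
`g+4` values `2Y, C_{−1}, m_0, …, m_{g+1}` is attained by at least two terms. -/
noncomputable def tropCurve (g : ℕ) (C : ℤ → ℝ) : Set (ℝ × ℝ) :=
  {p | ∃ j ∈ Finset.range (g + 4), ∃ k ∈ Finset.range (g + 4), j ≠ k ∧
    tropVals C p j = tropVals C p k ∧
    ∀ n ∈ Finset.range (g + 4), tropVals C p j ≤ tropVals C p n}

/-- `Γ_2 = {(X,Y) : min(2Y, C_{−1}, min_{k even} m_k) = min_{k odd} m_k}`
(with `0 ≤ k ≤ g+1`). -/
noncomputable def gammaTwo (g : ℕ) (C : ℤ → ℝ) : Set (ℝ × ℝ) :=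
  {p | min (min (2 * p.2) (C (-1)))
      (((Finset.range (g + 2)).filter (fun k => Even k)).inf'
        ⟨0, by simp⟩ (fun k => mTerm C k p)) =
    ((Finset.range (g + 2)).filter (fun k => Odd k)).inf'
      ⟨1, by simp [Nat.lt_add_of_pos_left]⟩ (fun k => mTerm C k p)}

/-- `Γ_3 = {(X,Y) : min(2Y, C_{−1}, min_{k odd} m_k) = min_{k even} m_k}`
(with `0 ≤ k ≤ g+1`). -/
noncomputable def gammaThree (g : ℕ) (C : ℤ → ℝ) : Set (ℝ × ℝ) :=
  {p | min (min (2 * p.2) (C (-1)))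
      (((Finset.range (g + 2)).filter (fun k => Odd k)).inf'
        ⟨1, by simp [Nat.lt_add_of_pos_left]⟩ (fun k => mTerm C k p)) =
    ((Finset.range (g + 2)).filter (fun k => Even k)).inf'
      ⟨0, by simp⟩ (fun k => mTerm C k p)}

/-- `Γ_4 = {(X,Y) : min(2Y, C_{−1}) = min_{0 ≤ k ≤ g+1} m_k}`. -/
noncomputable def gammaFour (g : ℕ) (C : ℤ → ℝ) : Set (ℝ × ℝ) :=
  {p | min (2 * p.2) (C (-1)) =
    (Finset.range (g + 2)).inf' ⟨0, by simp⟩ (fun k => mTerm C k p)}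

section TropAux

variable {g : ℕ} {C : ℤ → ℝ} {p : ℝ × ℝ}

lemma tropVals_zero' : tropVals C p 0 = 2 * p.2 := rfl
lemma tropVals_one' : tropVals C p 1 = C (-1) := rfl
lemma tropVals_two' (m : ℕ) : tropVals C p (m + 2) = mTerm C m p := rfl

lemma mem_evenSet {b : ℕ} (hb : b ≤ g + 1) (he : Even b) :
    b ∈ (Finset.range (g + 2)).filter (fun k => Even k) :=
  Finset.mem_filter.mpr ⟨Finset.mem_range.mpr (by omega), he⟩

lemma mem_oddSet {b : ℕ} (hb : b ≤ g + 1) (ho : Odd b) :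
    b ∈ (Finset.range (g + 2)).filter (fun k => Odd k) :=
  Finset.mem_filter.mpr ⟨Finset.mem_range.mpr (by omega), ho⟩

lemma mem_gammaTwo_of {M : ℝ}
    (hY : M ≤ 2 * p.2) (hC : M ≤ C (-1))
    (hm : ∀ a : ℕ, a ≤ g + 1 → M ≤ mTerm C a p)
    (hodd : ∃ a, a ≤ g + 1 ∧ Odd a ∧ mTerm C a p = M)
    (hoth : 2 * p.2 = M ∨ C (-1) = M ∨ ∃ b, b ≤ g + 1 ∧ Even b ∧ mTerm C b p = M) :
    p ∈ gammaTwo g C := by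
  obtain ⟨a, ha, hao, hfa⟩ := hodd
  have hIO : ((Finset.range (g + 2)).filter (fun k => Odd k)).inf'
      ⟨1, by simp [Nat.lt_add_of_pos_left]⟩ (fun k => mTerm C k p) = M := by
    refine le_antisymm (hfa ▸ Finset.inf'_le _ (mem_oddSet ha hao)) ?_
    refine Finset.le_inf' _ _ fun b hb => hm b ?_
    have := Finset.mem_range.mp (Finset.mem_filter.mp hb).1; omega
  have hIE : M ≤ ((Finset.range (g + 2)).filter (fun k => Even k)).inf'
      ⟨0, by simp⟩ (fun k => mTerm C k p) := by
    refine Finset.le_inf' _ _ fun b hb => hm b ?_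
    have := Finset.mem_range.mp (Finset.mem_filter.mp hb).1; omega
  show min (min (2 * p.2) (C (-1))) _ = _
  rw [hIO]
  refine le_antisymm ?_ (le_min (le_min hY hC) hIE)
  rcases hoth with h | h | ⟨b, hb, hbe, hfb⟩
  · exact le_trans (le_trans (min_le_left _ _) (min_le_left _ _)) h.le
  · exact le_trans (le_trans (min_le_left _ _) (min_le_right _ _)) h.le
  · exact le_trans (min_le_right _ _) ((Finset.inf'_le _ (mem_evenSet hb hbe)).trans hfb.le)

lemma mem_gammaThree_of {M : ℝ}
    (hY : M ≤ 2 * p.2) (hC : M ≤ C (-1))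
    (hm : ∀ a : ℕ, a ≤ g + 1 → M ≤ mTerm C a p)
    (heven : ∃ a, a ≤ g + 1 ∧ Even a ∧ mTerm C a p = M)
    (hoth : 2 * p.2 = M ∨ C (-1) = M ∨ ∃ b, b ≤ g + 1 ∧ Odd b ∧ mTerm C b p = M) :
    p ∈ gammaThree g C := by
  obtain ⟨a, ha, hae, hfa⟩ := heven
  have hIE : ((Finset.range (g + 2)).filter (fun k => Even k)).inf'
      ⟨0, by simp⟩ (fun k => mTerm C k p) = M := by
    refine le_antisymm (hfa ▸ Finset.inf'_le _ (mem_evenSet ha hae)) ?_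
    refine Finset.le_inf' _ _ fun b hb => hm b ?_
    have := Finset.mem_range.mp (Finset.mem_filter.mp hb).1; omega
  have hIO : M ≤ ((Finset.range (g + 2)).filter (fun k => Odd k)).inf'
      ⟨1, by simp [Nat.lt_add_of_pos_left]⟩ (fun k => mTerm C k p) := by
    refine Finset.le_inf' _ _ fun b hb => hm b ?_
    have := Finset.mem_range.mp (Finset.mem_filter.mp hb).1; omega
  show min (min (2 * p.2) (C (-1))) _ = _
  rw [hIE]
  refine le_antisymm ?_ (le_min (le_min hY hC) hIO)
  rcases hoth with h | h | ⟨b, hb, hbo, hfb⟩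
  · exact le_trans (le_trans (min_le_left _ _) (min_le_left _ _)) h.le
  · exact le_trans (le_trans (min_le_left _ _) (min_le_right _ _)) h.le
  · exact le_trans (min_le_right _ _) ((Finset.inf'_le _ (mem_oddSet hb hbo)).trans hfb.le)

lemma gammaTwo_subset_tropCurve : gammaTwo g C ⊆ tropCurve g C := by
  intro p hp
  have hp' : min (min (2 * p.2) (C (-1)))
      (((Finset.range (g + 2)).filter (fun k => Even k)).inf'
        ⟨0, by simp⟩ (fun k => mTerm C k p)) =
      ((Finset.range (g + 2)).filter (fun k => Odd k)).inf'
        ⟨1, by simp [Nat.lt_add_of_pos_left]⟩ (fun k => mTerm C k p) := hp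
  obtain ⟨a, haO, hfa⟩ := Finset.exists_mem_eq_inf'
    (⟨1, by simp [Nat.lt_add_of_pos_left]⟩ :
      ((Finset.range (g + 2)).filter (fun k => Odd k)).Nonempty) (fun k => mTerm C k p)
  obtain ⟨ha1, ha2⟩ := Finset.mem_filter.mp haO
  have halt := Finset.mem_range.mp ha1
  have hlb : ∀ n ∈ Finset.range (g + 4),
      min (min (2 * p.2) (C (-1)))
        (((Finset.range (g + 2)).filter (fun k => Even k)).inf'
          ⟨0, by simp⟩ (fun k => mTerm C k p)) ≤ tropVals C p n := by
    intro n hn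
    match n with
    | 0 => exact le_trans (min_le_left _ _) (min_le_left _ _)
    | 1 => exact le_trans (min_le_left _ _) (min_le_right _ _)
    | (m + 2) =>
      have hm2 : m < g + 2 := by have := Finset.mem_range.mp hn; omega
      rw [tropVals_two']
      rcases Nat.even_or_odd m with he | ho
      · exact le_trans (min_le_right _ _)
          (Finset.inf'_le _ (Finset.mem_filter.mpr ⟨Finset.mem_range.mpr hm2, he⟩))
      · rw [hp']
        exact Finset.inf'_le _ (Finset.mem_filter.mpr ⟨Finset.mem_range.mpr hm2, ho⟩)
  rcases le_or_gt (min (2 * p.2) (C (-1)))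
    (((Finset.range (g + 2)).filter (fun k => Even k)).inf'
      ⟨0, by simp⟩ (fun k => mTerm C k p)) with hcase | hcase
  · have hmin : min (min (2 * p.2) (C (-1)))
        (((Finset.range (g + 2)).filter (fun k => Even k)).inf'
          ⟨0, by simp⟩ (fun k => mTerm C k p)) = min (2 * p.2) (C (-1)) :=
      min_eq_left hcase
    rcases le_total (2 * p.2) (C (-1)) with h2 | h2
    · refine ⟨0, by simp, a + 2, Finset.mem_range.mpr (by omega), by omega, ?_, ?_⟩
      · rw [tropVals_zero', tropVals_two', ← hfa, ← hp', hmin]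
        exact (min_eq_left h2).symm
      · intro n hn
        have he0 : tropVals C p 0 = min (min (2 * p.2) (C (-1)))
            (((Finset.range (g + 2)).filter (fun k => Even k)).inf'
              ⟨0, by simp⟩ (fun k => mTerm C k p)) := by
          rw [tropVals_zero', hmin]; exact (min_eq_left h2).symm
        rw [he0]; exact hlb n hn
    · refine ⟨1, by simp, a + 2, Finset.mem_range.mpr (by omega), by omega, ?_, ?_⟩
      · rw [tropVals_one', tropVals_two', ← hfa, ← hp', hmin]
        exact (min_eq_right h2).symm
      · intro n hn
        have he1 : tropVals C p 1 = min (min (2 * p.2) (C (-1)))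
            (((Finset.range (g + 2)).filter (fun k => Even k)).inf'
              ⟨0, by simp⟩ (fun k => mTerm C k p)) := by
          rw [tropVals_one', hmin]; exact (min_eq_right h2).symm
        rw [he1]; exact hlb n hn
  · have hmin : min (min (2 * p.2) (C (-1)))
        (((Finset.range (g + 2)).filter (fun k => Even k)).inf'
          ⟨0, by simp⟩ (fun k => mTerm C k p)) =
        (((Finset.range (g + 2)).filter (fun k => Even k)).inf'
          ⟨0, by simp⟩ (fun k => mTerm C k p)) := min_eq_right hcase.le
    obtain ⟨b, hbE, hfb⟩ := Finset.exists_mem_eq_inf'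
      (⟨0, by simp⟩ : ((Finset.range (g + 2)).filter (fun k => Even k)).Nonempty)
      (fun k => mTerm C k p)
    obtain ⟨hb1, hb2⟩ := Finset.mem_filter.mp hbE
    have hblt := Finset.mem_range.mp hb1
    have hab : b ≠ a := by
      intro h; rw [h] at hb2; exact (Nat.not_even_iff_odd.mpr ha2) hb2
    refine ⟨b + 2, Finset.mem_range.mpr (by omega), a + 2,
      Finset.mem_range.mpr (by omega), by omega, ?_, ?_⟩
    · rw [tropVals_two', tropVals_two', ← hfa, ← hfb, ← hp', hmin]
    · intro n hn
      have heb : tropVals C p (b + 2) = min (min (2 * p.2) (C (-1)))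
          (((Finset.range (g + 2)).filter (fun k => Even k)).inf'
            ⟨0, by simp⟩ (fun k => mTerm C k p)) := by
        rw [tropVals_two', hmin, hfb]
      rw [heb]; exact hlb n hn

lemma gammaThree_subset_tropCurve : gammaThree g C ⊆ tropCurve g C := by
  intro p hp
  have hp' : min (min (2 * p.2) (C (-1)))
      (((Finset.range (g + 2)).filter (fun k => Odd k)).inf'
        ⟨1, by simp [Nat.lt_add_of_pos_left]⟩ (fun k => mTerm C k p)) =
      ((Finset.range (g + 2)).filter (fun k => Even k)).inf'
        ⟨0, by simp⟩ (fun k => mTerm C k p) := hp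
  obtain ⟨a, haE, hfa⟩ := Finset.exists_mem_eq_inf'
    (⟨0, by simp⟩ : ((Finset.range (g + 2)).filter (fun k => Even k)).Nonempty)
    (fun k => mTerm C k p)
  obtain ⟨ha1, ha2⟩ := Finset.mem_filter.mp haE
  have halt := Finset.mem_range.mp ha1
  have hlb : ∀ n ∈ Finset.range (g + 4),
      min (min (2 * p.2) (C (-1)))
        (((Finset.range (g + 2)).filter (fun k => Odd k)).inf'
          ⟨1, by simp [Nat.lt_add_of_pos_left]⟩ (fun k => mTerm C k p)) ≤
        tropVals C p n := by
    intro n hn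
    match n with
    | 0 => exact le_trans (min_le_left _ _) (min_le_left _ _)
    | 1 => exact le_trans (min_le_left _ _) (min_le_right _ _)
    | (m + 2) =>
      have hm2 : m < g + 2 := by have := Finset.mem_range.mp hn; omega
      rw [tropVals_two']
      rcases Nat.even_or_odd m with he | ho
      · rw [hp']
        exact Finset.inf'_le _ (Finset.mem_filter.mpr ⟨Finset.mem_range.mpr hm2, he⟩)
      · exact le_trans (min_le_right _ _)
          (Finset.inf'_le _ (Finset.mem_filter.mpr ⟨Finset.mem_range.mpr hm2, ho⟩))
  rcases le_or_gt (min (2 * p.2) (C (-1)))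
    (((Finset.range (g + 2)).filter (fun k => Odd k)).inf'
      ⟨1, by simp [Nat.lt_add_of_pos_left]⟩ (fun k => mTerm C k p)) with hcase | hcase
  · have hmin : min (min (2 * p.2) (C (-1)))
        (((Finset.range (g + 2)).filter (fun k => Odd k)).inf'
          ⟨1, by simp [Nat.lt_add_of_pos_left]⟩ (fun k => mTerm C k p)) =
        min (2 * p.2) (C (-1)) := min_eq_left hcase
    rcases le_total (2 * p.2) (C (-1)) with h2 | h2
    · refine ⟨0, by simp, a + 2, Finset.mem_range.mpr (by omega), by omega, ?_, ?_⟩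
      · rw [tropVals_zero', tropVals_two', ← hfa, ← hp', hmin]
        exact (min_eq_left h2).symm
      · intro n hn
        have he0 : tropVals C p 0 = min (min (2 * p.2) (C (-1)))
            (((Finset.range (g + 2)).filter (fun k => Odd k)).inf'
              ⟨1, by simp [Nat.lt_add_of_pos_left]⟩ (fun k => mTerm C k p)) := by
          rw [tropVals_zero', hmin]; exact (min_eq_left h2).symm
        rw [he0]; exact hlb n hn
    · refine ⟨1, by simp, a + 2, Finset.mem_range.mpr (by omega), by omega, ?_, ?_⟩
      · rw [tropVals_one', tropVals_two', ← hfa, ← hp', hmin]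
        exact (min_eq_right h2).symm
      · intro n hn
        have he1 : tropVals C p 1 = min (min (2 * p.2) (C (-1)))
            (((Finset.range (g + 2)).filter (fun k => Odd k)).inf'
              ⟨1, by simp [Nat.lt_add_of_pos_left]⟩ (fun k => mTerm C k p)) := by
          rw [tropVals_one', hmin]; exact (min_eq_right h2).symm
        rw [he1]; exact hlb n hn
  · have hmin : min (min (2 * p.2) (C (-1)))
        (((Finset.range (g + 2)).filter (fun k => Odd k)).inf'
          ⟨1, by simp [Nat.lt_add_of_pos_left]⟩ (fun k => mTerm C k p)) =
        (((Finset.range (g + 2)).filter (fun k => Odd k)).inf'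
          ⟨1, by simp [Nat.lt_add_of_pos_left]⟩ (fun k => mTerm C k p)) :=
      min_eq_right hcase.le
    obtain ⟨b, hbO, hfb⟩ := Finset.exists_mem_eq_inf'
      (⟨1, by simp [Nat.lt_add_of_pos_left]⟩ :
        ((Finset.range (g + 2)).filter (fun k => Odd k)).Nonempty) (fun k => mTerm C k p)
    obtain ⟨hb1, hb2⟩ := Finset.mem_filter.mp hbO
    have hblt := Finset.mem_range.mp hb1
    have hab : b ≠ a := by
      intro h; rw [h] at hb2; exact (Nat.not_even_iff_odd.mpr hb2) ha2
    refine ⟨b + 2, Finset.mem_range.mpr (by omega), a + 2,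
      Finset.mem_range.mpr (by omega), by omega, ?_, ?_⟩
    · rw [tropVals_two', tropVals_two', ← hfa, ← hfb, ← hp', hmin]
    · intro n hn
      have heb : tropVals C p (b + 2) = min (min (2 * p.2) (C (-1)))
          (((Finset.range (g + 2)).filter (fun k => Odd k)).inf'
            ⟨1, by simp [Nat.lt_add_of_pos_left]⟩ (fun k => mTerm C k p)) := by
        rw [tropVals_two', hmin, hfb]
      rw [heb]; exact hlb n hn

end TropAux

theorem tropCurve_decomposition (g : ℕ) (hg : 1 ≤ g) (C : ℤ → ℝ)
    (hCg1 : C ((g : ℤ) + 1) = 0)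
    (h1 : C (-1) > 2 * C 0)
    (h2 : ∀ i : ℕ, (i : ℤ) ≤ (g : ℤ) - 2 → C i + C (i + 2) > 2 * C (i + 1))
    (h3 : C ((g : ℤ) - 1) > 2 * C g) :
    tropCurve g C = gammaTwo g C ∪ gammaThree g C ∧
    tropCurve g C = gammaTwo g C ∪ gammaThree g C ∪ gammaFour g C := by
  -- convexity of C at interior points
  have keyC : ∀ l : ℕ, l + 1 ≤ g → C (l : ℤ) + C ((l : ℤ) + 2) > 2 * C ((l : ℤ) + 1) := by
    intro l hl
    rcases eq_or_lt_of_le hl with hE | hlt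
    · have e1 : ((g : ℤ) - 1) = (l : ℤ) := by omega
      have e2 : (g : ℤ) = (l : ℤ) + 1 := by omega
      have e3 : ((g : ℤ) + 1) = (l : ℤ) + 2 := by omega
      rw [e1, e2] at h3
      rw [e3] at hCg1
      rw [hCg1]
      linarith
    · exact h2 l (by omega)
  -- main inclusion: tropCurve ⊆ Γ₂ ∪ Γ₃
  have main : tropCurve g C ⊆ gammaTwo g C ∪ gammaThree g C := by
    intro p hp
    obtain ⟨j, hj, k, hk, hjk, heq, hle⟩ := hp
    set M := tropVals C p j with hMdef
    have hY : M ≤ 2 * p.2 := hle 0 (Finset.mem_range.mpr (by omega))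
    have hC : M ≤ C (-1) := hle 1 (Finset.mem_range.mpr (by omega))
    have hm : ∀ a : ℕ, a ≤ g + 1 → M ≤ mTerm C a p := by
      intro a ha
      have := hle (a + 2) (Finset.mem_range.mpr (by omega))
      rwa [tropVals_two'] at this
    have keyd : ∀ l : ℕ, l + 1 ≤ g →
        mTerm C l p + mTerm C (l + 2) p > 2 * mTerm C (l + 1) p := by
      intro l hl
      have hk := keyC l hl
      simp only [mTerm]
      push_cast
      linarith
    have dmono : ∀ a b : ℕ, a ≤ b → b ≤ g →
        mTerm C (a + 1) p - mTerm C a p ≤ mTerm C (b + 1) p - mTerm C b p := by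
      intro a b hab
      induction b, hab using Nat.le_induction with
      | base => intro _; exact le_refl _
      | succ b hab ih =>
        intro hbg
        have h1 := keyd b hbg
        have h2 := ih (by omega)
        linarith
    have keylem : ∀ a b : ℕ, a + 2 ≤ b → b ≤ g + 1 →
        mTerm C a p = M → mTerm C b p = M → False := by
      intro a b hab hbg hfa hfb
      have hda : 0 ≤ mTerm C (a + 1) p - mTerm C a p := by
        have := hm (a + 1) (by omega)
        linarith [hfa]
      have hstep : ∀ l : ℕ, a + 2 ≤ l → l ≤ g + 1 → mTerm C (a + 1) p < mTerm C l p := by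
        intro l hal
        induction l, hal using Nat.le_induction with
        | base =>
          intro hl
          have hd := keyd a (by omega)
          linarith
        | succ l hal ih =>
          intro hl
          have ihh := ih (by omega)
          have hd1 := dmono (a + 1) l (by omega) (by omega)
          have hd2 := keyd a (by omega)
          linarith
      have h5 := hstep b hab hbg
      have h6 := hm (a + 1) (by omega)
      rw [hfb] at h5
      linarith
    -- contradiction when 2Y = C₋₁ = M
    have key01 : 2 * p.2 = M → C (-1) = M → False := by
      intro hY2 hC2
      have h0 := hm 0 (by omega)
      simp only [mTerm, Nat.cast_zero, zero_mul, zero_add] at h0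
      linarith
    -- classify an index ≥ 2
    have hvj : tropVals C p j = M := rfl
    have hvk : tropVals C p k = M := heq.symm
    clear heq
    -- symmetric two-index handler
    have handler : ∀ j' k' : ℕ, j' < g + 4 → k' < g + 4 → j' ≠ k' →
        tropVals C p j' = M → tropVals C p k' = M →
        p ∈ gammaTwo g C ∪ gammaThree g C := by
      have parity2 : ∀ a b : ℕ, a ≠ b → a ≤ g + 1 → b ≤ g + 1 →
          mTerm C a p = M → mTerm C b p = M → (Even a ↔ Even b) → False := by
        intro a b hab ha hb hfa hfb hpar
        rcases lt_or_gt_of_ne hab with h | h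
        · have : a + 2 ≤ b := by
            rcases Nat.even_or_odd a with he | ho
            · have := hpar.mp he
              rw [Nat.even_iff] at he this; omega
            · have : ¬ Even b := fun hb' => (Nat.not_even_iff_odd.mpr ho) (hpar.mpr hb')
              rw [Nat.odd_iff] at ho
              rw [Nat.not_even_iff_odd, Nat.odd_iff] at this; omega
          exact keylem a b this hb hfa hfb
        · have : b + 2 ≤ a := by
            rcases Nat.even_or_odd a with he | ho
            · have := hpar.mp he
              rw [Nat.even_iff] at he this; omega
            · have : ¬ Even b := fun hb' => (Nat.not_even_iff_odd.mpr ho) (hpar.mpr hb')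
              rw [Nat.odd_iff] at ho
              rw [Nat.not_even_iff_odd, Nat.odd_iff] at this; omega
          exact keylem b a this ha hfb hfa
      intro j' k' hj' hk' hne hv1 hv2
      match j', k' with
      | 0, 0 => exact absurd rfl hne
      | 1, 1 => exact absurd rfl hne
      | 0, 1 => exact (key01 hv1 hv2).elim
      | 1, 0 => exact (key01 hv2 hv1).elim
      | 0, (b + 2) =>
        rw [tropVals_two'] at hv2
        rcases Nat.even_or_odd b with he | ho
        · exact Or.inr (mem_gammaThree_of hY hC hm ⟨b, by omega, he, hv2⟩ (Or.inl hv1))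
        · exact Or.inl (mem_gammaTwo_of hY hC hm ⟨b, by omega, ho, hv2⟩ (Or.inl hv1))
      | (b + 2), 0 =>
        rw [tropVals_two'] at hv1
        rcases Nat.even_or_odd b with he | ho
        · exact Or.inr (mem_gammaThree_of hY hC hm ⟨b, by omega, he, hv1⟩ (Or.inl hv2))
        · exact Or.inl (mem_gammaTwo_of hY hC hm ⟨b, by omega, ho, hv1⟩ (Or.inl hv2))
      | 1, (b + 2) =>
        rw [tropVals_two'] at hv2
        rcases Nat.even_or_odd b with he | ho
        · exact Or.inr (mem_gammaThree_of hY hC hm ⟨b, by omega, he, hv2⟩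
            (Or.inr (Or.inl hv1)))
        · exact Or.inl (mem_gammaTwo_of hY hC hm ⟨b, by omega, ho, hv2⟩
            (Or.inr (Or.inl hv1)))
      | (b + 2), 1 =>
        rw [tropVals_two'] at hv1
        rcases Nat.even_or_odd b with he | ho
        · exact Or.inr (mem_gammaThree_of hY hC hm ⟨b, by omega, he, hv1⟩
            (Or.inr (Or.inl hv2)))
        · exact Or.inl (mem_gammaTwo_of hY hC hm ⟨b, by omega, ho, hv1⟩
            (Or.inr (Or.inl hv2)))
      | (a + 2), (b + 2) =>
        rw [tropVals_two'] at hv1 hv2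
        have hab : a ≠ b := by omega
        have ha1 : a ≤ g + 1 := by omega
        have hb1 : b ≤ g + 1 := by omega
        rcases Nat.even_or_odd a with hea | hoa
        · rcases Nat.even_or_odd b with heb | hob
          · exact (parity2 a b hab ha1 hb1 hv1 hv2 ⟨fun _ => heb, fun _ => hea⟩).elim
          · exact Or.inl (mem_gammaTwo_of hY hC hm ⟨b, hb1, hob, hv2⟩
              (Or.inr (Or.inr ⟨a, ha1, hea, hv1⟩)))
        · rcases Nat.even_or_odd b with heb | hob
          · exact Or.inl (mem_gammaTwo_of hY hC hm ⟨a, ha1, hoa, hv1⟩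
              (Or.inr (Or.inr ⟨b, hb1, heb, hv2⟩)))
          · exact (parity2 a b hab ha1 hb1 hv1 hv2
              ⟨fun h => absurd h (Nat.not_even_iff_odd.mpr hoa),
               fun h => absurd h (Nat.not_even_iff_odd.mpr hob)⟩).elim
    exact handler j k (Finset.mem_range.mp hj) (Finset.mem_range.mp hk) hjk hvj hvk
  -- Γ₄ ⊆ Γ₂ ∪ Γ₃
  have four : gammaFour g C ⊆ gammaTwo g C ∪ gammaThree g C := by
    intro p hp
    have hp' : min (2 * p.2) (C (-1)) =
        (Finset.range (g + 2)).inf' ⟨0, by simp⟩ (fun k => mTerm C k p) := hp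
    obtain ⟨a, haR, hfa⟩ := Finset.exists_mem_eq_inf'
      (⟨0, by simp⟩ : (Finset.range (g + 2)).Nonempty) (fun k => mTerm C k p)
    have halt := Finset.mem_range.mp haR
    have hY : min (2 * p.2) (C (-1)) ≤ 2 * p.2 := min_le_left _ _
    have hC : min (2 * p.2) (C (-1)) ≤ C (-1) := min_le_right _ _
    have hm : ∀ b : ℕ, b ≤ g + 1 → min (2 * p.2) (C (-1)) ≤ mTerm C b p := by
      intro b hb
      rw [hp']
      exact Finset.inf'_le _ (Finset.mem_range.mpr (by omega))
    have hfa' : mTerm C a p = min (2 * p.2) (C (-1)) := by rw [hp', hfa]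
    have hoth2 : 2 * p.2 = min (2 * p.2) (C (-1)) ∨
        C (-1) = min (2 * p.2) (C (-1)) := by
      rcases min_choice (2 * p.2) (C (-1)) with h | h
      · exact Or.inl h.symm
      · exact Or.inr h.symm
    rcases Nat.even_or_odd a with he | ho
    · exact Or.inr (mem_gammaThree_of hY hC hm ⟨a, by omega, he, hfa'⟩
        (hoth2.imp id Or.inl))
    · exact Or.inl (mem_gammaTwo_of hY hC hm ⟨a, by omega, ho, hfa'⟩
        (hoth2.imp id Or.inl))
  constructor
  · refine Set.Subset.antisymm main ?_
    intro p hp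
    rcases hp with h | h
    · exact gammaTwo_subset_tropCurve h
    · exact gammaThree_subset_tropCurve h
  · refine Set.Subset.antisymm (fun p hp => Or.inl (main hp)) ?_
    intro p hp
    rcases hp with h | h
    · rcases h with h | h
      · exact gammaTwo_subset_tropCurve h
      · exact gammaThree_subset_tropCurve h
    · rcases four h with h' | h'
      · exact gammaTwo_subset_tropCurve h'
      · exact gammaThree_subset_tropCurve h'
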